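/- Let r_m = (1/(2Δ)) ∫_{θ-Δ}^{θ+Δ} e^{-j2πDm sin α} dα and let C be the M×M circulant matrix with first column c_0 = r_0 and c_m = r_m + r_{m-M} for 1 ≤ m ≤ M-1. Then the k-th eigenvalue of C equals λ_k(C) = -1 + (1/Δ) ∫_{θ-Δ}^{θ+Δ} cos(π ω_k(D,α)(M-1)) · sin(π ω_k(D,α) M)/sin(π ω_k(D,α)) dα, where ω_k(D,α) = D sin(α) + k/M, provided sin(π ω_k(D,α)) ≠ 0 for all α in [θ-Δ, θ+Δ]. -/

import Mathlib

open Real MeasureTheory BigOperators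

lemma alg (e f : ℂ) (he : e ≠ 0) (hf : f ≠ 0) (h1 : (1:ℂ) - e^2 ≠ 0) :
    ((f^2)⁻¹ - 1) / ((e^2)⁻¹ - 1) + (((f^2)⁻¹ - 1) / ((e^2)⁻¹ - 1) - 1) * (f^2) =
    2 * ((f * e⁻¹ + (f * e⁻¹)⁻¹) / 2 * ((f⁻¹ - f) * Complex.I / 2) / ((e⁻¹ - e) * Complex.I / 2)) - 1 := by
  have d1 : ((e^2)⁻¹ - 1 : ℂ) = (1 - e^2)/e^2 := by field_simp
  have d2 : ((f^2)⁻¹ - 1 : ℂ) = (1 - f^2)/f^2 := by field_simp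
  have d3 : (e⁻¹ - e : ℂ) = (1 - e^2)/e := by field_simp
  have d4 : (f⁻¹ - f : ℂ) = (1 - f^2)/f := by field_simp
  have d5 : (f*e⁻¹ + (f*e⁻¹)⁻¹ : ℂ) = (f^2 + e^2)/(e*f) := by field_simp
  rw [d1, d2, d3, d4, d5]
  obtain ⟨u, hu⟩ : ∃ u : ℂ, u = 1 - e^2 := ⟨_, rfl⟩
  have hu0 : u ≠ 0 := by rw [hu]; exact h1
  have he2 : e^2 = 1 - u := by rw [hu]; ring
  rw [← hu, he2]
  have h1u : (1:ℂ) - u ≠ 0 := by rw [← he2]; exact pow_ne_zero 2 he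
  have hI := Complex.I_ne_zero
  field_simp
  have hD : (e * f * 2 * (f * 2) * (u * Complex.I) : ℂ) ≠ 0 := by
    simp [he, hf, hu0, hI]
  ring


lemma key (M : ℕ) (hM : 0 < M) (ω : ℝ) (h : Real.sin (π * ω) ≠ 0) :
    (∑ m ∈ Finset.range M, Complex.exp (-(2 * (π:ℂ) * Complex.I * (ω:ℂ)) * m)) +
      ∑ m ∈ Finset.Ico 1 M, Complex.exp (-(2 * (π:ℂ) * Complex.I * (ω:ℂ)) * (((m : ℤ) : ℂ) - (M:ℂ))) =
    ((2 * (Real.cos (π * ω * ((M:ℝ) - 1)) * Real.sin (π * ω * M) / Real.sin (π * ω)) - 1 : ℝ) : ℂ) := by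
  set z : ℂ := -(2 * (π:ℂ) * Complex.I * (ω:ℂ)) with hz
  set w : ℂ := Complex.exp z with hwdef
  set E : ℂ := Complex.exp ((π:ℂ) * (ω:ℂ) * Complex.I) with hE
  have hEne : E ≠ 0 := Complex.exp_ne_zero _
  have hwne : w ≠ 0 := Complex.exp_ne_zero _
  have hwE : w = (E^2)⁻¹ := by
    rw [hwdef, hz, hE, ← Complex.exp_nat_mul, ← Complex.exp_neg]
    ring_nf
  have hw1 : w ≠ 1 := by
    intro hw
    rw [hwdef, Complex.exp_eq_one_iff] at hw
    obtain ⟨n, hn⟩ := hw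
    have h2 : (2:ℂ) * π * Complex.I ≠ 0 := by
      simp [Real.pi_ne_zero, Complex.I_ne_zero]
    have hc : (2:ℂ)*π*Complex.I * (-ω) = (2:ℂ)*π*Complex.I * n := by
      rw [hz] at hn; linear_combination hn
    have hωn : ((-ω : ℝ) : ℂ) = ((n:ℝ) : ℂ) := by push_cast; exact mul_left_cancel₀ h2 hc
    have hω : ω = -(n : ℝ) := by
      have := Complex.ofReal_inj.mp hωn; linarith
    apply h
    rw [hω, show π * (-(n:ℝ)) = ((-n : ℤ) : ℝ) * π by push_cast; ring]
    exact Real.sin_int_mul_pi _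
  set F : ℂ := E ^ M with hF
  have hFne : F ≠ 0 := pow_ne_zero _ hEne
  have hwM : w ^ M = (F^2)⁻¹ := by
    rw [hwE, hF, inv_pow, ← pow_mul, ← pow_mul, Nat.mul_comm]
  have key1 : (∑ m ∈ Finset.range M, Complex.exp (z * m)) = (w^M - 1)/(w - 1) := by
    have e1 : ∀ m : ℕ, Complex.exp (z * m) = w ^ m := fun m => by
      rw [mul_comm, Complex.exp_nat_mul]
    simp_rw [e1]
    exact geom_sum_eq hw1 M
  have key2 : (∑ m ∈ Finset.Ico 1 M, Complex.exp (z * (((m : ℤ) : ℂ) - (M:ℂ)))) =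
      ((w^M - 1)/(w - 1) - 1) * (w^M)⁻¹ := by
    have e2 : ∀ m : ℕ, Complex.exp (z * (((m : ℤ) : ℂ) - (M:ℂ))) = w ^ m * (w^M)⁻¹ := by
      intro m
      have : ((((m : ℤ) : ℂ)) - (M:ℂ)) * z = (((m : ℤ) - (M:ℤ) : ℤ) : ℂ) * z := by push_cast; ring
      rw [mul_comm, this, Complex.exp_int_mul, zpow_sub₀ hwne]
      push_cast [zpow_natCast]
      rw [div_eq_mul_inv]
    simp_rw [e2, ← Finset.sum_mul]
    congr 1
    have hsplit : (∑ m ∈ Finset.Ico 0 1, w ^ m) + ∑ m ∈ Finset.Ico 1 M, w ^ m =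
        ∑ m ∈ Finset.Ico 0 M, w ^ m := Finset.sum_Ico_consecutive _ (by norm_num) hM
    rw [← Finset.range_eq_Ico, ← Finset.range_eq_Ico] at hsplit
    rw [geom_sum_eq hw1 M] at hsplit
    simp only [Finset.range_one, Finset.sum_singleton, pow_zero] at hsplit
    linear_combination hsplit
  rw [key1, key2]
  -- now the trig side
  have hsinC : ((Real.sin (π * ω) : ℝ) : ℂ) = (E⁻¹ - E) * Complex.I / 2 := by
    rw [Complex.ofReal_sin]
    show (Complex.exp (-(↑(π * ω)) * Complex.I) - Complex.exp ((↑(π * ω)) * Complex.I)) * Complex.I / 2 = _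
    rw [show (-(↑(π * ω)) * Complex.I : ℂ) = -((π:ℂ) * ω * Complex.I) by push_cast; ring,
        show ((↑(π * ω)) * Complex.I : ℂ) = (π:ℂ) * ω * Complex.I by push_cast; ring,
        Complex.exp_neg]
  have hsinB : ((Real.sin (π * ω * M) : ℝ) : ℂ) = (F⁻¹ - F) * Complex.I / 2 := by
    rw [Complex.ofReal_sin]
    show (Complex.exp (-(↑(π * ω * M)) * Complex.I) - Complex.exp ((↑(π * ω * M)) * Complex.I)) * Complex.I / 2 = _
    rw [show (-(↑(π * ω * M)) * Complex.I : ℂ) = -((M:ℕ) * ((π:ℂ) * ω * Complex.I)) by push_cast; ring,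
        show ((↑(π * ω * M)) * Complex.I : ℂ) = ((M:ℕ)) * ((π:ℂ) * ω * Complex.I) by push_cast; ring,
        Complex.exp_neg, Complex.exp_nat_mul]
  have hcosA : ((Real.cos (π * ω * ((M:ℝ) - 1)) : ℝ) : ℂ) = (F * E⁻¹ + (F * E⁻¹)⁻¹) / 2 := by
    rw [Complex.ofReal_cos]
    show (Complex.exp ((↑(π * ω * ((M:ℝ)-1))) * Complex.I) + Complex.exp (-(↑(π * ω * ((M:ℝ)-1))) * Complex.I)) / 2 = _
    have hM1 : ((π * ω * ((M:ℝ) - 1) : ℝ) : ℂ) * Complex.I = ((M - 1 : ℕ) : ℂ) * ((π:ℂ) * ω * Complex.I) := by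
      push_cast [Nat.cast_sub hM]
      ring
    rw [show (-(↑(π * ω * ((M:ℝ)-1))) * Complex.I : ℂ) = -((↑(π * ω * ((M:ℝ)-1)) : ℂ) * Complex.I) by ring,
        hM1, Complex.exp_neg, Complex.exp_nat_mul]
    have hpow : E ^ (M - 1) = F * E⁻¹ := by
      rw [pow_sub₀ E hEne hM, pow_one, hF]
    rw [hpow]
  rw [show ((2 * (Real.cos (π * ω * ((M:ℝ) - 1)) * Real.sin (π * ω * M) / Real.sin (π * ω)) - 1 : ℝ) : ℂ)
      = 2 * (((Real.cos (π * ω * ((M:ℝ) - 1)) : ℝ) : ℂ) * ((Real.sin (π * ω * M) : ℝ):ℂ) / ((Real.sin (π * ω) : ℝ):ℂ)) - 1 by push_cast; ring]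
  have hsinCne : ((E⁻¹ - E) * Complex.I / 2 : ℂ) ≠ 0 := by
    rw [← hsinC]
    exact Complex.ofReal_ne_zero.mpr h
  have hEinv : E⁻¹ - E ≠ 0 := by
    intro h0
    apply hsinCne
    rw [h0]; ring
  have h1E : (1:ℂ) - E^2 ≠ 0 := by
    intro h0
    apply hEinv
    have : E^2 = 1 := by linear_combination -h0
    field_simp
    linear_combination -this
  rw [hwM, hwE, hcosA, hsinB, hsinC, inv_inv]
  exact alg E F hEne hFne h1E

theorem stmt11 (M : ℕ) (hM : 0 < M) (k : Fin M) (D θ Δ : ℝ) (hΔ : 0 < Δ) (hD : 0 < D)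
    (r : ℤ → ℂ)
    (hr : ∀ m : ℤ, r m = (1 / (2 * (Δ : ℂ))) *
      ∫ α in (θ - Δ)..(θ + Δ),
        Complex.exp (-(2 * (π : ℂ) * Complex.I * (D : ℂ) * (m : ℂ) * (Real.sin α : ℂ))))
    (c : ℕ → ℂ)
    (hc0 : c 0 = r 0)
    (hc : ∀ m : ℕ, 1 ≤ m → m ≤ M - 1 → c m = r m + r ((m : ℤ) - (M : ℤ)))
    (hsin : ∀ α ∈ Set.Icc (θ - Δ) (θ + Δ),
      Real.sin (π * (D * Real.sin α + (k.val : ℝ) / M)) ≠ 0) :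
    ∑ m ∈ Finset.range M,
        c m * Complex.exp (-(2 * (π : ℂ) * Complex.I * (m : ℂ) * (k.val : ℂ) / (M : ℂ)))
      = -1 + (1 / (Δ : ℂ)) * ∫ α in (θ - Δ)..(θ + Δ),
          ((Real.cos (π * (D * Real.sin α + (k.val : ℝ) / M) * ((M : ℝ) - 1)) *
            Real.sin (π * (D * Real.sin α + (k.val : ℝ) / M) * (M : ℝ)) /
            Real.sin (π * (D * Real.sin α + (k.val : ℝ) / M)) : ℝ) : ℂ) := by
  set a := θ - Δ with ha
  set b := θ + Δ with hb
  have hab : a ≤ b := by rw [ha, hb]; linarith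
  have hMne : (M:ℂ) ≠ 0 := Nat.cast_ne_zero.mpr hM.ne'
  set ω : ℝ → ℝ := fun α => D * Real.sin α + (k.val : ℝ) / M with hω
  set e : ℕ → ℂ := fun m => Complex.exp (-(2 * (π : ℂ) * Complex.I * (m : ℂ) * (k.val : ℂ) / (M : ℂ))) with he
  set z : ℝ → ℂ := fun α => -(2 * (π:ℂ) * Complex.I * ((ω α : ℝ) : ℂ)) with hzdef
  -- pointwise exponent identities
  have hexp1 : ∀ (m : ℕ) (α : ℝ),
      Complex.exp (-(2 * (π : ℂ) * Complex.I * (D : ℂ) * ((m : ℤ) : ℂ) * (Real.sin α : ℂ))) * e m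
        = Complex.exp (z α * m) := by
    intro m α
    rw [he, ← Complex.exp_add]
    congr 1
    simp only [hzdef, hω]
    push_cast
    field_simp
    ring
  have hexp2 : ∀ (m : ℕ) (α : ℝ),
      Complex.exp (-(2 * (π : ℂ) * Complex.I * (D : ℂ) * (((m : ℤ) - (M:ℤ) : ℤ) : ℂ) * (Real.sin α : ℂ))) * e m
        = Complex.exp (z α * (((m : ℤ) : ℂ) - (M:ℂ))) := by
    intro m α
    have hZ : (-(2 * (π:ℂ) * Complex.I * (D:ℂ) * (((m : ℤ) - (M:ℤ) : ℤ) : ℂ) * (Real.sin α : ℂ)))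
        + (-(2 * (π : ℂ) * Complex.I * (m : ℂ) * (k.val : ℂ) / (M : ℂ)))
        = z α * (((m:ℤ):ℂ) - (M:ℂ)) + ((-(k.val:ℤ) : ℤ) : ℂ) * (2 * (π:ℂ) * Complex.I) := by
      simp only [hzdef, hω]
      push_cast
      field_simp
      ring
    rw [he, ← Complex.exp_add, hZ, Complex.exp_add, Complex.exp_int_mul_two_pi_mul_I, mul_one]
  -- integrability
  have hzc : Continuous z := by
    rw [hzdef]
    have : Continuous ω := by rw [hω]; fun_prop
    fun_prop
  have hint1 : ∀ m : ℕ, IntervalIntegrable (fun α => Complex.exp (z α * m)) volume a b :=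
    fun m => (Complex.continuous_exp.comp (hzc.mul continuous_const)).intervalIntegrable _ _
  have hint2 : ∀ m : ℕ, IntervalIntegrable (fun α => Complex.exp (z α * (((m : ℤ) : ℂ) - (M:ℂ)))) volume a b :=
    fun m => (Complex.continuous_exp.comp (hzc.mul continuous_const)).intervalIntegrable _ _
  have hA : IntervalIntegrable (fun α => ∑ m ∈ Finset.range M, Complex.exp (z α * m)) volume a b :=
    (continuous_finset_sum _ (fun m _ => Complex.continuous_exp.comp (hzc.mul continuous_const))).intervalIntegrable _ _
  have hB : IntervalIntegrable (fun α => ∑ m ∈ Finset.Ico 1 M, Complex.exp (z α * (((m : ℤ) : ℂ) - (M:ℂ)))) volume a b :=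
    (continuous_finset_sum _ (fun m _ => Complex.continuous_exp.comp (hzc.mul continuous_const))).intervalIntegrable _ _
  -- rewrite each r-term as an integral
  have hr1 : ∀ m : ℕ, r m * e m = (1 / (2 * (Δ : ℂ))) * ∫ α in a..b, Complex.exp (z α * m) := by
    intro m
    have := hr m
    push_cast at this
    rw [this, mul_assoc, ← intervalIntegral.integral_mul_const]
    congr 1
    refine intervalIntegral.integral_congr fun α _ => ?_
    have := hexp1 m α
    push_cast at this ⊢
    exact this
  have hr2 : ∀ m : ℕ, r ((m:ℤ) - M) * e m
      = (1 / (2 * (Δ : ℂ))) * ∫ α in a..b, Complex.exp (z α * (((m : ℤ) : ℂ) - (M:ℂ))) := by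
    intro m
    have := hr ((m:ℤ) - M)
    push_cast at this
    rw [this, mul_assoc, ← intervalIntegral.integral_mul_const]
    congr 1
    refine intervalIntegral.integral_congr fun α _ => ?_
    have := hexp2 m α
    push_cast at this ⊢
    exact this
  -- split the sum
  have hsum : (∑ m ∈ Finset.range M, c m * e m)
      = (Finset.sum (Finset.range M) (fun m : ℕ => r m * e m)) + ∑ m ∈ Finset.Ico 1 M, r ((m:ℤ) - M) * e m := by
    rw [Finset.range_eq_Ico,
        ← Finset.sum_Ico_consecutive (fun m => c m * e m) (Nat.zero_le 1) hM,
        ← Finset.sum_Ico_consecutive (fun m : ℕ => r m * e m) (Nat.zero_le 1) hM]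
    have e0 : (∑ m ∈ Finset.Ico 0 1, c m * e m) = Finset.sum (Finset.Ico 0 1) (fun m : ℕ => r m * e m) := by
      simp [hc0]
    have ec : (∑ m ∈ Finset.Ico 1 M, c m * e m)
        = ∑ m ∈ Finset.Ico 1 M, ((fun m : ℕ => r m * e m) m + r ((m:ℤ) - M) * e m) := by
      refine Finset.sum_congr rfl fun m hm => ?_
      rw [Finset.mem_Ico] at hm
      rw [hc m hm.1 (by omega)]
      ring
    rw [e0, ec, Finset.sum_add_distrib]
    ring
  -- assemble into one integral
  have hmain : (∑ m ∈ Finset.range M, c m * e m)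
      = (1 / (2 * (Δ : ℂ))) * ∫ α in a..b,
          ((∑ m ∈ Finset.range M, Complex.exp (z α * m)) +
            ∑ m ∈ Finset.Ico 1 M, Complex.exp (z α * (((m : ℤ) : ℂ) - (M:ℂ)))) := by
    rw [intervalIntegral.integral_add hA hB,
        intervalIntegral.integral_finset_sum (fun m _ => hint1 m),
        intervalIntegral.integral_finset_sum (fun m _ => hint2 m),
        mul_add, Finset.mul_sum, Finset.mul_sum, hsum]
    simp_rw [hr1, hr2]
  have hωc : Continuous ω := by rw [hω]; fun_prop
  set f : ℝ → ℝ := fun α => Real.cos (π * ω α * ((M:ℝ) - 1)) * Real.sin (π * ω α * (M:ℝ)) /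
      Real.sin (π * ω α) with hf
  have hfc : ContinuousOn f (Set.Icc a b) := by
    rw [hf]
    apply ContinuousOn.div
    · exact (Continuous.continuousOn (by fun_prop))
    · exact (Continuous.continuousOn (by fun_prop))
    · intro α hα
      exact hsin α hα
  have hfint : IntervalIntegrable f volume a b := by
    apply ContinuousOn.intervalIntegrable
    rw [Set.uIcc_of_le hab]
    exact hfc
  have hDint : (∫ α in a..b,
        ((∑ m ∈ Finset.range M, Complex.exp (z α * m)) +
          ∑ m ∈ Finset.Ico 1 M, Complex.exp (z α * (((m : ℤ) : ℂ) - (M:ℂ)))))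
      = ∫ α in a..b, ((2 * f α - 1 : ℝ) : ℂ) := by
    refine intervalIntegral.integral_congr ?_
    intro α hα
    rw [Set.uIcc_of_le hab] at hα
    have hk := key M hM (ω α) (hsin α hα)
    simp only [hzdef, hf]
    convert hk using 3
  have hreal : (∫ α in a..b, (2 * f α - 1)) = 2 * (∫ α in a..b, f α) - (b - a) := by
    rw [intervalIntegral.integral_sub (hfint.const_mul 2) intervalIntegrable_const,
        intervalIntegral.integral_const_mul, intervalIntegral.integral_const, smul_eq_mul, mul_one]
  have hgoalint : (∫ α in a..b,
        ((Real.cos (π * (D * Real.sin α + (k.val : ℝ) / M) * ((M : ℝ) - 1)) *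
          Real.sin (π * (D * Real.sin α + (k.val : ℝ) / M) * (M : ℝ)) /
          Real.sin (π * (D * Real.sin α + (k.val : ℝ) / M)) : ℝ) : ℂ))
      = (((∫ α in a..b, f α) : ℝ) : ℂ) := by
    rw [← intervalIntegral.integral_ofReal]
  have hba : b - a = 2 * Δ := by rw [ha, hb]; ring
  calc (∑ m ∈ Finset.range M,
        c m * Complex.exp (-(2 * (π : ℂ) * Complex.I * (m : ℂ) * (k.val : ℂ) / (M : ℂ))))
      = (1 / (2 * (Δ : ℂ))) * ∫ α in a..b,
          ((∑ m ∈ Finset.range M, Complex.exp (z α * m)) +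
            ∑ m ∈ Finset.Ico 1 M, Complex.exp (z α * (((m : ℤ) : ℂ) - (M:ℂ)))) := hmain
    _ = (1 / (2 * (Δ : ℂ))) * ∫ α in a..b, ((2 * f α - 1 : ℝ) : ℂ) := by rw [hDint]
    _ = (1 / (2 * (Δ : ℂ))) * (((2 * (∫ α in a..b, f α) - (b - a) : ℝ)) : ℂ) := by
          rw [intervalIntegral.integral_ofReal, hreal]
    _ = -1 + (1 / (Δ : ℂ)) * (((∫ α in a..b, f α) : ℝ) : ℂ) := by
          rw [hba]
          have hΔc : (Δ : ℂ) ≠ 0 := Complex.ofReal_ne_zero.mpr hΔ.ne'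
          push_cast
          field_simp
          ring
    _ = -1 + (1 / (Δ : ℂ)) * ∫ α in a..b,
          ((Real.cos (π * (D * Real.sin α + (k.val : ℝ) / M) * ((M : ℝ) - 1)) *
            Real.sin (π * (D * Real.sin α + (k.val : ℝ) / M) * (M : ℝ)) /
            Real.sin (π * (D * Real.sin α + (k.val : ℝ) / M)) : ℝ) : ℂ) := by rw [hgoalint]
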